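/- Let m, n ≥ 0 and let λ be an m-asymmetric partition of length at most m+n. Then Π_{u∈λ} [m+n+c(u)]_q = Π_{u∈λ'} [n+c(u)]_q, where [a]_q = 1 + q + ... + q^{a-1} is the q-integer, c(u) the content of cell u, and λ' the conjugate. -/

import Mathlib

open Polynomial

/-- The q-integer [a] = 1 + q + ... + q^(a-1), as a polynomial in q. -/
noncomputable def qint (a : ℕ) : Polynomial ℤ :=
  ∑ i ∈ Finset.range a, X ^ i

/-- A Young diagram `μ` is `m`-asymmetric if its Frobenius coordinates `(α|β)` satisfy
`β i = α i + m` for all `i` up to the rank. -/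
def YoungDiagram.IsAsymmetric (m : ℕ) (μ : YoungDiagram) : Prop :=
  ∀ i : ℕ, (i, i) ∈ μ → μ.colLen i = μ.rowLen i + m

/-- The hook-flip map: within each principal hook, send a cell of content `c`
to the cell of content `-c - m`. -/
def hflip (m : ℕ) (u : ℕ × ℕ) : ℕ × ℕ :=
  if u.1 ≤ u.2 then (u.2 + m, u.1)
  else if u.2 + m ≤ u.1 then (u.2, u.1 - m)
  else (u.2 + (u.2 + m - u.1), u.2)

lemma hflip_invol (m : ℕ) (u : ℕ × ℕ) : hflip m (hflip m u) = u := by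
  obtain ⟨i, j⟩ := u
  simp only [hflip]
  split_ifs <;> simp_all <;> omega

lemma hflip_content (m : ℕ) (u : ℕ × ℕ) :
    ((hflip m u).1 : ℤ) - (hflip m u).2 = (u.2 : ℤ) - u.1 + m := by
  obtain ⟨i, j⟩ := u
  simp only [hflip]
  split_ifs <;> push_cast <;> omega

lemma hflip_mem (m : ℕ) (μ : YoungDiagram) (hasym : μ.IsAsymmetric m)
    {u : ℕ × ℕ} (hu : u ∈ μ) : hflip m u ∈ μ := by
  obtain ⟨i, j⟩ := u
  simp only [hflip]
  split_ifs with h1 h2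
  · -- i ≤ j, diagonal cell (i,i) ∈ μ
    have hd : (i, i) ∈ μ := μ.up_left_mem le_rfl h1 hu
    have := hasym i hd
    rw [YoungDiagram.mem_iff_lt_colLen, this]
    rw [YoungDiagram.mem_iff_lt_rowLen] at hu
    omega
  · -- j < i, j + m ≤ i
    have hd : (j, j) ∈ μ := μ.up_left_mem (by omega) le_rfl hu
    have := hasym j hd
    rw [YoungDiagram.mem_iff_lt_rowLen]
    rw [YoungDiagram.mem_iff_lt_colLen, this] at hu
    omega
  · -- j < i < j + m
    have hd : (j, j) ∈ μ := μ.up_left_mem (by omega) le_rfl hu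
    have := hasym j hd
    have hjj := YoungDiagram.mem_iff_lt_rowLen.mp hd
    rw [YoungDiagram.mem_iff_lt_colLen, this]
    omega

/-- Let m, n ≥ 0 and λ an m-asymmetric partition of length at most m+n.
Then Π_{u∈λ} [m+n+c(u)]_q = Π_{u∈λ'} [n+c(u)]_q as polynomials in q. -/
theorem prod_qint_content_eq_conj (m n : ℕ) (μ : YoungDiagram)
    (hlen : μ.colLen 0 ≤ m + n) (hasym : μ.IsAsymmetric m) :
    ∏ u ∈ μ.cells, qint (((m : ℤ) + (n : ℤ) + ((u.2 : ℤ) - (u.1 : ℤ))).toNat) =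
      ∏ u ∈ μ.transpose.cells, qint (((n : ℤ) + ((u.2 : ℤ) - (u.1 : ℤ))).toNat) := by
  -- rewrite RHS as a product over μ.cells via swap
  have hswap : ∏ u ∈ μ.transpose.cells, qint (((n : ℤ) + ((u.2 : ℤ) - (u.1 : ℤ))).toNat)
      = ∏ u ∈ μ.cells, qint (((n : ℤ) + ((u.1 : ℤ) - (u.2 : ℤ))).toNat) := by
    refine Finset.prod_nbij' (fun u => u.swap) (fun u => u.swap) ?_ ?_ ?_ ?_ ?_
    · intro a ha
      simpa [YoungDiagram.mem_cells] using (YoungDiagram.mem_transpose.mp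
        (YoungDiagram.mem_cells _ |>.mp ha))
    · intro a ha
      simp only [YoungDiagram.mem_cells, YoungDiagram.mem_transpose]
      simpa [YoungDiagram.mem_cells] using ha
    · intro a _; simp
    · intro a _; simp
    · intro a _; rfl
  rw [hswap]
  refine Finset.prod_nbij' (hflip m) (hflip m) ?_ ?_ ?_ ?_ ?_
  · intro a ha
    simpa [YoungDiagram.mem_cells] using
      hflip_mem m μ hasym ((YoungDiagram.mem_cells _).mp ha)
  · intro a ha
    simpa [YoungDiagram.mem_cells] using
      hflip_mem m μ hasym ((YoungDiagram.mem_cells _).mp ha)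
  · intro a _; exact hflip_invol m a
  · intro a _; exact hflip_invol m a
  · intro a _
    congr 1
    have := hflip_content m a
    omega
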